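/- arXiv:1012.3892 — 2 statements merged into one kernel-verified Lean document; each statement's English description precedes it below -/
import Mathlib

section
/- Let p be a positive integer and let b_i = binom(p, i-1) for all positive integers i. Then for all integers n, k with 1 ≤ k ≤ n, C^b(n,k) = binom(pk, n-k). -/
open Finset

/-- The number of generalized compositions of `n` with `k` parts, where the part `i`
comes in `b i` types: the sum over all `k`-tuples of positive integers summing to `n`
of the product of the `b`-values of the parts. -/
def genComp (b : ℕ → ℕ) (n k : ℕ) : ℕ :=
  ∑ f ∈ (Finset.Nat.antidiagonalTuple k n).filter (fun f => ∀ j, 0 < f j),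
    ∏ j, b (f j)

/-- The total number of generalized compositions of `n` (with any number of parts). -/
def genCompAll (b : ℕ → ℕ) (n : ℕ) : ℕ :=
  ∑ k ∈ Finset.range (n + 1), genComp b n k

lemma sum_antidiagonalTuple_succ {M : Type*} [AddCommMonoid M] {k n : ℕ}
    (F : (Fin (k + 1) → ℕ) → M) :
    ∑ f ∈ Finset.Nat.antidiagonalTuple (k + 1) n, F f =
      ∑ ij ∈ Finset.HasAntidiagonal.antidiagonal n, ∑ g ∈ Finset.Nat.antidiagonalTuple k ij.2,
        F (Fin.cons ij.1 g) := by
  have h : ∑ f ∈ Finset.Nat.antidiagonalTuple (k + 1) n, F f =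
      ∑ x ∈ (Finset.HasAntidiagonal.antidiagonal n).sigma (fun ij => Finset.Nat.antidiagonalTuple k ij.2),
        F (Fin.cons x.1.1 x.2) := by
    refine Finset.sum_nbij' (fun (f : Fin (k+1) → ℕ) => ⟨(f 0, ∑ j : Fin k, f j.succ), Fin.tail f⟩)
      (fun x => Fin.cons x.1.1 x.2) ?_ ?_ ?_ ?_ ?_
    · intro f hf
      rw [Finset.Nat.mem_antidiagonalTuple] at hf
      refine Finset.mem_sigma.2 ⟨?_, ?_⟩
      · rw [Finset.HasAntidiagonal.mem_antidiagonal]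
        rw [← hf, Fin.sum_univ_succ]
      · rw [Finset.Nat.mem_antidiagonalTuple]
        rfl
    · intro x hx
      rw [Finset.mem_sigma, Finset.HasAntidiagonal.mem_antidiagonal, Finset.Nat.mem_antidiagonalTuple] at hx
      rw [Finset.Nat.mem_antidiagonalTuple, Fin.sum_univ_succ]
      simp [hx.2, hx.1]
    · intro f hf
      simp [Fin.cons_self_tail]
    · intro x hx
      obtain ⟨⟨a, b⟩, g⟩ := x
      rw [Finset.mem_sigma, Finset.HasAntidiagonal.mem_antidiagonal, Finset.Nat.mem_antidiagonalTuple] at hx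
      have hb2 : ∑ j : Fin k, g j = b := hx.2
      simp [Fin.cons_zero, Fin.cons_succ, Fin.tail_cons, hb2]
    · intro f hf
      rw [Fin.cons_self_tail]
  rw [h, Finset.sum_sigma]

lemma key (p : ℕ) : ∀ k m : ℕ,
    ∑ g ∈ Finset.Nat.antidiagonalTuple k m, ∏ j, Nat.choose p (g j) = Nat.choose (p * k) m := by
  intro k
  induction k with
  | zero =>
    intro m
    cases m with
    | zero => simp
    | succ m => simp
  | succ k ih =>
    intro m
    rw [sum_antidiagonalTuple_succ (fun g => ∏ j, Nat.choose p (g j))]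
    have : ∀ ij ∈ Finset.HasAntidiagonal.antidiagonal m,
        (∑ g ∈ Finset.Nat.antidiagonalTuple k ij.2,
          ∏ j, Nat.choose p ((Fin.cons ij.1 g : Fin (k+1) → ℕ) j)) =
        Nat.choose p ij.1 * Nat.choose (p * k) ij.2 := by
      intro ij _
      rw [← ih ij.2, Finset.mul_sum]
      refine Finset.sum_congr rfl fun g _ => ?_
      rw [Fin.prod_univ_succ]
      simp
    rw [Finset.sum_congr rfl this, ← Nat.add_choose_eq]
    congr 1
    ring

theorem genComp_binom_upper (p : ℕ) (hp : 1 ≤ p) (b : ℕ → ℕ)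
    (hb : ∀ i, 1 ≤ i → b i = Nat.choose p (i - 1))
    (n k : ℕ) (hk : 1 ≤ k) (hkn : k ≤ n) :
    genComp b n k = Nat.choose (p * k) (n - k) := by
  rw [genComp, ← key p k (n - k)]
  refine Finset.sum_nbij' (fun f j => f j - 1) (fun g j => g j + 1) ?_ ?_ ?_ ?_ ?_
  · intro f hf
    rw [Finset.mem_filter, Finset.Nat.mem_antidiagonalTuple] at hf
    rw [Finset.Nat.mem_antidiagonalTuple]
    have h1 : ∑ j, (f j - 1 + 1) = n := by
      rw [← hf.1]; exact Finset.sum_congr rfl fun j _ => Nat.succ_pred_eq_of_pos (hf.2 j)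
    rw [Finset.sum_add_distrib] at h1
    simp only [Finset.sum_const, Finset.card_univ, Fintype.card_fin, smul_eq_mul, mul_one] at h1
    omega
  · intro g hg
    rw [Finset.Nat.mem_antidiagonalTuple] at hg
    rw [Finset.mem_filter, Finset.Nat.mem_antidiagonalTuple]
    dsimp only
    constructor
    · rw [Finset.sum_add_distrib, hg]
      simp only [Finset.sum_const, Finset.card_univ, Fintype.card_fin, smul_eq_mul, mul_one]
      omega
    · intro j; omega
  · intro f hf
    rw [Finset.mem_filter] at hf
    ext j
    dsimp only
    have := hf.2 j
    omega
  · intro g _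
    ext j
    dsimp only
    omega
  · intro f hf
    rw [Finset.mem_filter] at hf
    dsimp only
    exact Finset.prod_congr rfl fun j _ => hb (f j) (hf.2 j)
end

section
/- Let p and q be positive integers, and let b_i = binom(i+p-1, q) for all positive integers i. Then there exist integers m_0, m_1, …, m_q, not depending on n, such that for all integers n ≥ 2, C^b(n+q+1) = ∑_{i=0}^{q} m_i · C^b(n+i) (an identity of integers). -/
open Finset

private def auxF (q x j : ℕ) : ℤ := (-1)^j * ((q+2).choose j) * ((x + (q+2-j)).choose (q+1))
private def auxG (q x j : ℕ) : ℤ := (-1)^j * ((q+1).choose j) * ((x + (q+2-j)).choose (q+1))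
private def auxH (q x j : ℕ) : ℤ := (-1)^j * ((q+1).choose j) * ((x + (q+1-j)).choose (q+1))

lemma diffzero (q : ℕ) (x : ℕ) :
    ∑ j ∈ Finset.range (q + 2),
      (-1 : ℤ) ^ j * ((q + 1).choose j) * ((x + (q + 1 - j)).choose q) = 0 := by
  induction q generalizing x with
  | zero => simp [Finset.sum_range_succ]
  | succ q ih =>
    have key : ∀ j ∈ Finset.range (q + 2),
        auxG q x j - auxH q x j
        = (-1 : ℤ) ^ j * ((q + 1).choose j) * ((x + (q + 1 - j)).choose q) := by
      intro j hj
      rw [Finset.mem_range] at hj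
      have h1 : x + (q + 2 - j) = (x + (q + 1 - j)) + 1 := by omega
      unfold auxG auxH
      rw [h1, Nat.choose_succ_succ']
      push_cast
      ring
    have hFG0 : auxF q x 0 = auxG q x 0 := by simp [auxF, auxG]
    have hG : auxG q x (q+2) = 0 := by
      simp [auxG, Nat.choose_succ_self]
    have hstep : ∀ j ∈ Finset.range (q+2), auxF q x (j+1) = auxG q x (j+1) - auxH q x j := by
      intro j hj
      rw [Finset.mem_range] at hj
      unfold auxF auxG auxH
      have h2 : q + 2 - (j + 1) = q + 1 - j := by omega
      rw [h2, Nat.choose_succ_succ (q+1) j]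
      push_cast
      ring
    have main : ∑ j ∈ Finset.range (q + 3), auxF q x j = 0 := by
      calc ∑ j ∈ Finset.range (q + 3), auxF q x j
          = ∑ j ∈ Finset.range (q + 2), auxF q x (j+1) + auxF q x 0 :=
            Finset.sum_range_succ' (auxF q x) (q+2)
        _ = ∑ j ∈ Finset.range (q + 2), (auxG q x (j+1) - auxH q x j) + auxG q x 0 := by
            rw [hFG0]; congr 1; exact Finset.sum_congr rfl hstep
        _ = (∑ j ∈ Finset.range (q + 2), auxG q x (j+1) + auxG q x 0)
              - ∑ j ∈ Finset.range (q + 2), auxH q x j := by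
            rw [Finset.sum_sub_distrib]; ring
        _ = ∑ j ∈ Finset.range (q + 3), auxG q x j
              - ∑ j ∈ Finset.range (q + 2), auxH q x j := by
            rw [← Finset.sum_range_succ' (auxG q x) (q+2)]
        _ = ∑ j ∈ Finset.range (q + 2), auxG q x j
              - ∑ j ∈ Finset.range (q + 2), auxH q x j := by
            rw [Finset.sum_range_succ, hG, add_zero]
        _ = ∑ j ∈ Finset.range (q + 2), (auxG q x j - auxH q x j) := by
            rw [Finset.sum_sub_distrib]
        _ = ∑ j ∈ Finset.range (q + 2),
              (-1 : ℤ) ^ j * ((q + 1).choose j) * ((x + (q + 1 - j)).choose q) :=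
            Finset.sum_congr rfl key
        _ = 0 := ih x
    have : q + 1 + 2 = q + 3 := by omega
    rw [this]
    simpa [auxF] using main


lemma genComp_zero_parts (b : ℕ → ℕ) (n : ℕ) : genComp b n 0 = if n = 0 then 1 else 0 := by
  rcases n with _ | n
  · simp [genComp, Finset.Nat.antidiagonalTuple_zero_zero]
  · simp [genComp, Finset.Nat.antidiagonalTuple_zero_succ]

lemma genComp_eq_zero (b : ℕ → ℕ) {n k : ℕ} (h : n < k) : genComp b n k = 0 := by
  rw [genComp]
  apply Finset.sum_eq_zero
  intro f hf
  exfalso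
  rw [Finset.mem_filter, Finset.Nat.mem_antidiagonalTuple] at hf
  have : k ≤ n := by
    calc k = ∑ j : Fin k, 1 := by simp
    _ ≤ ∑ j, f j := Finset.sum_le_sum fun j _ => hf.2 j
    _ = n := hf.1
  omega

lemma genComp_succ (b : ℕ → ℕ) (n k : ℕ) :
    genComp b n (k + 1) = ∑ i ∈ Finset.Icc 1 n, b i * genComp b (n - i) k := by
  have hrw : ∑ i ∈ Finset.Icc 1 n, b i * genComp b (n - i) k
      = ∑ x ∈ (Finset.Icc 1 n).sigma
          (fun i => (Finset.Nat.antidiagonalTuple k (n - i)).filter (fun f => ∀ j, 0 < f j)),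
          b x.1 * ∏ j, b (x.2 j) := by
    rw [Finset.sum_sigma]
    exact Finset.sum_congr rfl fun i _ => by rw [genComp, Finset.mul_sum]
  rw [hrw, genComp]
  clear hrw
  refine Finset.sum_nbij' (i := fun f => ⟨f 0, Fin.tail f⟩) (j := fun x => Fin.cons x.1 x.2)
    ?_ ?_ ?_ ?_ ?_
  · intro f hf
    rw [Finset.mem_filter, Finset.Nat.mem_antidiagonalTuple] at hf
    rw [Finset.mem_sigma, Finset.mem_filter, Finset.Nat.mem_antidiagonalTuple]
    obtain ⟨S, hS⟩ : ∃ S, ∑ j : Fin k, Fin.tail f j = S := ⟨_, rfl⟩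
    have hsum : f 0 + S = n := by
      rw [← hS, ← hf.1, Fin.sum_univ_succ]; rfl
    have h0 := hf.2 0
    have hpos := fun j : Fin k => hf.2 j.succ
    clear hf
    refine ⟨Finset.mem_Icc.2 ⟨h0, by show f 0 ≤ n; omega⟩, by show (∑ j : Fin k, Fin.tail f j) = n - f 0; omega, hpos⟩
  · intro x hx
    rw [Finset.mem_sigma, Finset.mem_filter, Finset.Nat.mem_antidiagonalTuple] at hx
    rw [Finset.mem_filter, Finset.Nat.mem_antidiagonalTuple]
    have h1 := Finset.mem_Icc.1 hx.1
    obtain ⟨S, hS⟩ : ∃ S, ∑ j : Fin k, x.2 j = S := ⟨_, rfl⟩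
    have h2 : S = n - x.1 := by rw [← hS]; exact hx.2.1
    have h3 := hx.2.2
    clear hx
    constructor
    · rw [Fin.sum_univ_succ]
      simp only [Fin.cons_zero, Fin.cons_succ]
      rw [hS]
      omega
    · intro j
      refine Fin.cases ?_ ?_ j
      · exact Nat.lt_of_lt_of_le Nat.zero_lt_one h1.1
      · intro i; simpa using h3 i
  · intro f hf
    exact Fin.cons_self_tail f
  · intro x hx
    simp
  · intro f hf
    rw [Fin.prod_univ_succ]
    rfl

lemma genCompAll_rec (b : ℕ → ℕ) (n : ℕ) (hn : 1 ≤ n) :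
    genCompAll b n = ∑ i ∈ Finset.Icc 1 n, b i * genCompAll b (n - i) := by
  obtain ⟨m, rfl⟩ : ∃ m, n = m + 1 := ⟨n - 1, by omega⟩
  have inner : ∀ i ∈ Finset.Icc 1 (m+1),
      ∑ k ∈ Finset.range (m+1), genComp b (m+1-i) k = genCompAll b (m+1-i) := by
    intro i hi
    rw [Finset.mem_Icc] at hi
    rw [genCompAll]
    symm
    apply Finset.sum_subset
    · apply Finset.range_subset_range.2; omega
    · intro k hk hk2
      rw [Finset.mem_range] at hk hk2
      exact genComp_eq_zero b (by omega)
  calc genCompAll b (m+1)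
      = ∑ k ∈ Finset.range (m+1), genComp b (m+1) (k+1)
          + genComp b (m+1) 0 := Finset.sum_range_succ' _ _
    _ = ∑ k ∈ Finset.range (m+1), ∑ i ∈ Finset.Icc 1 (m+1), b i * genComp b (m+1-i) k := by
        rw [genComp_zero_parts]
        simp only [Nat.succ_ne_zero, if_false, add_zero]
        exact Finset.sum_congr rfl fun k _ => genComp_succ b (m+1) k
    _ = ∑ i ∈ Finset.Icc 1 (m+1), ∑ k ∈ Finset.range (m+1), b i * genComp b (m+1-i) k :=
        Finset.sum_comm
    _ = ∑ i ∈ Finset.Icc 1 (m+1), b i * genCompAll b (m+1-i) := by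
        refine Finset.sum_congr rfl fun i hi => ?_
        rw [← Finset.mul_sum, inner i hi]

/-- integer-level recursion with padded range -/
lemma genCompAll_recZ (b : ℕ → ℕ) (M : ℕ) (hM : 1 ≤ M) (bz : ℕ → ℤ)
    (hbz0 : bz 0 = 0) (hbz : ∀ i, 1 ≤ i → bz i = (b i : ℤ)) :
    (genCompAll b M : ℤ) = ∑ k ∈ Finset.range (M + 1), bz (M - k) * (genCompAll b k : ℤ) := by
  have h1 : (genCompAll b M : ℤ)
      = ∑ i ∈ Finset.Icc 1 M, (b i : ℤ) * (genCompAll b (M - i) : ℤ) := by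
    rw [genCompAll_rec b M hM]
    push_cast
    rfl
  rw [h1, ← Finset.Ico_add_one_right_eq_Icc, Finset.sum_Ico_eq_sum_range]
  have h2 : M + 1 - 1 = M := by omega
  rw [h2]
  rw [Finset.sum_range_succ, Nat.sub_self, hbz0, zero_mul, add_zero]
  rw [← Finset.sum_range_reflect (fun k => bz (M - k) * (genCompAll b k : ℤ)) M]
  refine Finset.sum_congr rfl fun j hj => ?_
  rw [Finset.mem_range] at hj
  have e1 : M - (M - 1 - j) = j + 1 := by omega
  have e2 : M - 1 - j = M - (1 + j) := by omega
  rw [e1, e2, hbz (j+1) (by omega), Nat.add_comm 1 j]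

theorem genCompAll_linear_recurrence (p q : ℕ) (hp : 1 ≤ p) (hq : 1 ≤ q) (b : ℕ → ℕ)
    (hb : ∀ i, 1 ≤ i → b i = Nat.choose (i + p - 1) q) :
    ∃ m : ℕ → ℤ, ∀ n : ℕ, 2 ≤ n →
      (genCompAll b (n + q + 1) : ℤ) =
        ∑ i ∈ Finset.range (q + 1), m i * (genCompAll b (n + i) : ℤ) := by
  set bz : ℕ → ℤ := fun i => if i = 0 then 0 else (b i : ℤ) with hbzdef
  have hbz0 : bz 0 = 0 := by simp [hbzdef]
  have hbz : ∀ i, 1 ≤ i → bz i = (b i : ℤ) := by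
    intro i hi; simp only [hbzdef]; rw [if_neg (by omega)]
  set c : ℕ → ℤ := fun t => ∑ j ∈ Finset.range (q + 2),
    (-1 : ℤ) ^ j * ((q + 1).choose j) * bz (q + 1 - t - j) with hcdef
  refine ⟨fun i => c i - (-1 : ℤ) ^ (q + 1 - i) * ((q + 1).choose (q + 1 - i)), ?_⟩
  intro n hn
  -- Step 1: expand each A (n+q+1-j)
  have hA : ∀ j ∈ Finset.range (q + 2), (genCompAll b (n + q + 1 - j) : ℤ)
      = ∑ k ∈ Finset.range (n + q + 2), bz (n + q + 1 - j - k) * (genCompAll b k : ℤ) := by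
    intro j hj
    rw [Finset.mem_range] at hj
    rw [genCompAll_recZ b (n + q + 1 - j) (by omega) bz hbz0 hbz]
    apply Finset.sum_subset
    · apply Finset.range_subset_range.2; omega
    · intro k hk hk2
      rw [Finset.mem_range] at hk hk2
      have : n + q + 1 - j - k = 0 := by omega
      rw [this, hbz0, zero_mul]
  -- Step 2: swap sums
  have key : ∑ j ∈ Finset.range (q + 2),
        (-1 : ℤ) ^ j * ((q + 1).choose j) * (genCompAll b (n + q + 1 - j) : ℤ)
      = ∑ k ∈ Finset.range (n + q + 2),
          (∑ j ∈ Finset.range (q + 2), (-1 : ℤ) ^ j * ((q + 1).choose j)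
            * bz (n + q + 1 - j - k)) * (genCompAll b k : ℤ) := by
    calc ∑ j ∈ Finset.range (q + 2),
          (-1 : ℤ) ^ j * ((q + 1).choose j) * (genCompAll b (n + q + 1 - j) : ℤ)
        = ∑ j ∈ Finset.range (q + 2), ∑ k ∈ Finset.range (n + q + 2),
            (-1 : ℤ) ^ j * ((q + 1).choose j) * (bz (n + q + 1 - j - k)
              * (genCompAll b k : ℤ)) := by
          refine Finset.sum_congr rfl fun j hj => ?_
          rw [hA j hj, Finset.mul_sum]
      _ = ∑ k ∈ Finset.range (n + q + 2), ∑ j ∈ Finset.range (q + 2),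
            (-1 : ℤ) ^ j * ((q + 1).choose j) * (bz (n + q + 1 - j - k)
              * (genCompAll b k : ℤ)) := Finset.sum_comm
      _ = _ := by
          refine Finset.sum_congr rfl fun k _ => ?_
          rw [Finset.sum_mul]
          exact Finset.sum_congr rfl fun j _ => by ring
  -- Step 3: evaluate coefficients
  have coefLow : ∀ k, k < n → (∑ j ∈ Finset.range (q + 2),
      (-1 : ℤ) ^ j * ((q + 1).choose j) * bz (n + q + 1 - j - k)) = 0 := by
    intro k hk
    have := diffzero q (n - k - 1 + p)
    rw [← this]
    refine Finset.sum_congr rfl fun j hj => ?_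
    rw [Finset.mem_range] at hj
    have h1 : 1 ≤ n + q + 1 - j - k := by omega
    rw [hbz _ h1, hb _ h1]
    have h2 : n + q + 1 - j - k + p - 1 = n - k - 1 + p + (q + 1 - j) := by omega
    rw [h2]
  have coefHigh : ∀ t, t < q + 1 → (∑ j ∈ Finset.range (q + 2),
      (-1 : ℤ) ^ j * ((q + 1).choose j) * bz (n + q + 1 - j - (n + t))) = c t := by
    intro t ht
    rw [hcdef]
    refine Finset.sum_congr rfl fun j hj => ?_
    rw [Finset.mem_range] at hj
    have h1 : n + q + 1 - j - (n + t) = q + 1 - t - j := by omega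
    rw [h1]
  have coefTop : (∑ j ∈ Finset.range (q + 2),
      (-1 : ℤ) ^ j * ((q + 1).choose j) * bz (n + q + 1 - j - (n + (q + 1)))) = 0 := by
    apply Finset.sum_eq_zero
    intro j hj
    have h1 : n + q + 1 - j - (n + (q + 1)) = 0 := by omega
    rw [h1, hbz0, mul_zero]
  -- Step 3': the RHS of key equals ∑ c t * A (n+t)
  have key2 : ∑ k ∈ Finset.range (n + q + 2),
        (∑ j ∈ Finset.range (q + 2), (-1 : ℤ) ^ j * ((q + 1).choose j)
          * bz (n + q + 1 - j - k)) * (genCompAll b k : ℤ)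
      = ∑ t ∈ Finset.range (q + 1), c t * (genCompAll b (n + t) : ℤ) := by
    have hsplit : n + q + 2 = n + (q + 2) := by omega
    rw [hsplit, Finset.sum_range_add]
    have z1 : ∑ k ∈ Finset.range n,
        (∑ j ∈ Finset.range (q + 2), (-1 : ℤ) ^ j * ((q + 1).choose j)
          * bz (n + q + 1 - j - k)) * (genCompAll b k : ℤ) = 0 := by
      apply Finset.sum_eq_zero
      intro k hk
      rw [Finset.mem_range] at hk
      rw [coefLow k hk, zero_mul]
    rw [z1, zero_add]
    rw [Finset.sum_range_succ, coefTop, zero_mul, add_zero]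
    refine Finset.sum_congr rfl fun t ht => ?_
    rw [Finset.mem_range] at ht
    rw [coefHigh t ht]
  -- Step 4: reshape LHS of key
  have key3 : ∑ j ∈ Finset.range (q + 2),
        (-1 : ℤ) ^ j * ((q + 1).choose j) * (genCompAll b (n + q + 1 - j) : ℤ)
      = (genCompAll b (n + q + 1) : ℤ)
        + ∑ i ∈ Finset.range (q + 1), (-1 : ℤ) ^ (q + 1 - i)
            * ((q + 1).choose (q + 1 - i)) * (genCompAll b (n + i) : ℤ) := by
    rw [Finset.sum_range_succ'
      (fun j => (-1 : ℤ) ^ j * ((q + 1).choose j) * (genCompAll b (n + q + 1 - j) : ℤ))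
      (q + 1)]
    simp only [pow_zero, Nat.choose_zero_right, Nat.cast_one, one_mul, Nat.sub_zero]
    rw [add_comm]
    congr 1
    rw [← Finset.sum_range_reflect (fun i => (-1 : ℤ) ^ (q + 1 - i)
      * ((q + 1).choose (q + 1 - i)) * (genCompAll b (n + i) : ℤ)) (q + 1)]
    refine Finset.sum_congr rfl fun j hj => ?_
    rw [Finset.mem_range] at hj
    have h1 : q + 1 - (q + 1 - 1 - j) = j + 1 := by omega
    have h2 : n + (q + 1 - 1 - j) = n + q + 1 - (j + 1) := by omega
    rw [h1, h2]
  -- final assembly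
  have final := key
  rw [key2, key3] at final
  have expand : ∑ i ∈ Finset.range (q + 1),
      (c i - (-1 : ℤ) ^ (q + 1 - i) * ((q + 1).choose (q + 1 - i)))
        * (genCompAll b (n + i) : ℤ)
      = ∑ i ∈ Finset.range (q + 1), c i * (genCompAll b (n + i) : ℤ)
        - ∑ i ∈ Finset.range (q + 1), (-1 : ℤ) ^ (q + 1 - i)
            * ((q + 1).choose (q + 1 - i)) * (genCompAll b (n + i) : ℤ) := by
    rw [← Finset.sum_sub_distrib]
    exact Finset.sum_congr rfl fun i _ => by ring
  rw [expand]
  linarith [final]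
end
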